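/- Let 0 < ν < √(3/2) and let A be the soliton on finite background. Then in each temporal period there are exactly two singular points: the set {τ ∈ [0, 2π/ν) : A(0,τ) = 0} has exactly two elements. (This is because |2(1−ν²)/√(4−2ν²)| < 1 for 0 < ν < √(3/2), so the equation cos(ντ) = 2(1−ν²)/√(4−2ν²) has exactly two solutions per period of length 2π/ν.) -/

import Mathlib

open Real Filter Topology

/-- Benjamin–Feir growth rate `σ = ν√(2−ν²)`. -/
noncomputable def sfbSigma (ν : ℝ) : ℝ := ν * Real.sqrt (2 - ν ^ 2)

/-- Displaced amplitude `G(ξ,τ) = P(ξ)/(Q(ξ) − σ cos(ντ))` of the SFB, with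
`P(ξ) = ν√2·√(2ν²cosh²(σξ) − σ²)` and `Q(ξ) = ν√2·cosh(σξ)`. -/
noncomputable def sfbG (ν ξ τ : ℝ) : ℝ :=
  (ν * Real.sqrt 2 * Real.sqrt (2 * ν ^ 2 * Real.cosh (sfbSigma ν * ξ) ^ 2 - sfbSigma ν ^ 2)) /
  (ν * Real.sqrt 2 * Real.cosh (sfbSigma ν * ξ) - sfbSigma ν * Real.cos (ν * τ))

/-- SFB phase `φ(ξ) = arctan(−(σ/ν²) tanh(σξ))`. -/
noncomputable def sfbPhi (ν ξ : ℝ) : ℝ :=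
  Real.arctan (-(sfbSigma ν / ν ^ 2) * Real.tanh (sfbSigma ν * ξ))

/-- The soliton on finite background: `A(ξ,τ) = e^{−iξ}(G(ξ,τ)e^{iφ(ξ)} − 1)`. -/
noncomputable def sfbA (ν ξ τ : ℝ) : ℂ :=
  Complex.exp (-Complex.I * (ξ : ℂ)) *
    ((sfbG ν ξ τ : ℂ) * Complex.exp (Complex.I * (sfbPhi ν ξ : ℂ)) - 1)

/-- For `0 < ν < √(3/2)`, the SFB has exactly two singular points in
each temporal period: the set `{τ ∈ [0, 2π/ν) | A(0,τ) = 0}` has exactly two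
elements. -/
theorem sfb_two_singular_points_per_period
    (ν : ℝ) (hν0 : 0 < ν) (hν2 : ν < Real.sqrt (3 / 2)) :
    {τ ∈ Set.Ico (0 : ℝ) (2 * Real.pi / ν) | sfbA ν 0 τ = 0}.ncard = 2 := by
  have hν2sq : ν ^ 2 < 3 / 2 := by
    have h := Real.sq_sqrt (show (0:ℝ) ≤ 3/2 by norm_num)
    nlinarith [Real.sqrt_nonneg (3/2 : ℝ)]
  have h2ν : (0:ℝ) < 2 - ν ^ 2 := by nlinarith
  have hsqrt_pos : 0 < Real.sqrt (2 - ν ^ 2) := Real.sqrt_pos.mpr h2ν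
  have hsqrt2_pos : 0 < Real.sqrt 2 := Real.sqrt_pos.mpr (by norm_num)
  have hs_pos : 0 < sfbSigma ν := mul_pos hν0 hsqrt_pos
  have hs2 : sfbSigma ν ^ 2 = ν ^ 2 * (2 - ν ^ 2) := by
    rw [sfbSigma, mul_pow, Real.sq_sqrt h2ν.le]
  set c : ℝ := Real.sqrt 2 * (1 - ν ^ 2) / Real.sqrt (2 - ν ^ 2) with hc_def
  -- |c| < 1
  have hc2 : c ^ 2 < 1 := by
    rw [hc_def, div_pow, mul_pow, Real.sq_sqrt (show (0:ℝ) ≤ 2 by norm_num),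
      Real.sq_sqrt h2ν.le, div_lt_one h2ν]
    nlinarith [mul_pos hν0 hν0]
  have hc_lt : c < 1 := by nlinarith [sq_nonneg (c - 1)]
  have hc_gt : -1 < c := by nlinarith [sq_nonneg (c + 1)]
  -- σ * c = ν√2(1−ν²)
  have hsc : sfbSigma ν * c = ν * Real.sqrt 2 * (1 - ν ^ 2) := by
    rw [sfbSigma, hc_def]
    field_simp
  -- Characterization: A(0,τ) = 0 ↔ cos(ν τ) = c
  have hchar : ∀ τ : ℝ, sfbA ν 0 τ = 0 ↔ Real.cos (ν * τ) = c := by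
    intro τ
    have hphi : sfbPhi ν 0 = 0 := by
      simp [sfbPhi]
    have hnum : 2 * ν ^ 2 * Real.cosh (sfbSigma ν * 0) ^ 2 - sfbSigma ν ^ 2 = (ν ^ 2) ^ 2 := by
      rw [mul_zero, Real.cosh_zero, hs2]; ring
    have hG : sfbG ν 0 τ =
        (ν * Real.sqrt 2 * ν ^ 2) /
        (ν * Real.sqrt 2 - sfbSigma ν * Real.cos (ν * τ)) := by
      rw [sfbG, hnum, Real.sqrt_sq (sq_nonneg ν), mul_zero, Real.cosh_zero, mul_one]
    have hA : sfbA ν 0 τ = ((sfbG ν 0 τ : ℝ) : ℂ) - 1 := by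
      simp [sfbA, hphi]
    rw [hA]
    have hnum_pos : 0 < ν * Real.sqrt 2 * ν ^ 2 := by positivity
    constructor
    · intro h
      have hG1 : sfbG ν 0 τ = 1 := by
        have := sub_eq_zero.mp h
        exact_mod_cast this
      rw [hG] at hG1
      by_cases hden : ν * Real.sqrt 2 - sfbSigma ν * Real.cos (ν * τ) = 0
      · rw [hden, div_zero] at hG1; norm_num at hG1
      · rw [div_eq_one_iff_eq hden] at hG1
        have h1 : sfbSigma ν * Real.cos (ν * τ) = sfbSigma ν * c := by
          rw [hsc]; nlinarith [hG1]
        exact mul_left_cancel₀ hs_pos.ne' h1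
    · intro h
      have hden : ν * Real.sqrt 2 - sfbSigma ν * Real.cos (ν * τ) = ν * Real.sqrt 2 * ν ^ 2 := by
        rw [h, hsc]; ring
      have hG1 : sfbG ν 0 τ = 1 := by
        rw [hG, hden, div_self hnum_pos.ne']
      rw [hG1]; norm_num
  -- The two solutions
  set τ₁ : ℝ := Real.arccos c / ν with hτ₁
  set τ₂ : ℝ := (2 * Real.pi - Real.arccos c) / ν with hτ₂
  have harccos_pos : 0 < Real.arccos c := Real.arccos_pos.mpr hc_lt
  have harccos_lt : Real.arccos c < Real.pi := by
    rw [Real.arccos]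
    have := Real.neg_pi_div_two_lt_arcsin.mpr hc_gt
    linarith
  have hπ : 0 < Real.pi := Real.pi_pos
  have hset : {τ ∈ Set.Ico (0 : ℝ) (2 * Real.pi / ν) | sfbA ν 0 τ = 0} = {τ₁, τ₂} := by
    ext τ
    simp only [Set.mem_setOf_eq, Set.mem_Ico, Set.mem_insert_iff, Set.mem_singleton_iff]
    constructor
    · rintro ⟨⟨h0, hT⟩, hA0⟩
      have hcos : Real.cos (ν * τ) = c := (hchar τ).mp hA0
      have hx0 : 0 ≤ ν * τ := mul_nonneg hν0.le h0
      have hx2 : ν * τ < 2 * Real.pi := by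
        have h' := (lt_div_iff₀ hν0).mp hT
        nlinarith
      by_cases hxle : ν * τ ≤ Real.pi
      · left
        have : Real.arccos c = ν * τ := by
          rw [← hcos]; exact Real.arccos_cos hx0 hxle
        rw [hτ₁, this, mul_comm, mul_div_assoc, div_self hν0.ne', mul_one]
      · right
        push_neg at hxle
        have h1 : 0 ≤ 2 * Real.pi - ν * τ := by linarith
        have h2 : 2 * Real.pi - ν * τ ≤ Real.pi := by linarith
        have hcos2 : Real.cos (2 * Real.pi - ν * τ) = c := by
          rw [Real.cos_sub, Real.cos_two_pi, Real.sin_two_pi]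
          simpa using hcos
        have : Real.arccos c = 2 * Real.pi - ν * τ := by
          rw [← hcos2]; exact Real.arccos_cos h1 h2
        rw [hτ₂, this]
        field_simp
        ring
    · intro h
      rcases h with h | h
      · subst h
        have hcos : Real.cos (ν * τ₁) = c := by
          rw [hτ₁, mul_div_cancel₀ _ hν0.ne']
          exact Real.cos_arccos hc_gt.le hc_lt.le
        refine ⟨⟨by positivity, ?_⟩, (hchar τ₁).mpr hcos⟩
        rw [hτ₁, div_lt_div_iff₀ hν0 hν0]
        nlinarith
      · subst h
        have hcos : Real.cos (ν * τ₂) = c := by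
          rw [hτ₂, mul_div_cancel₀ _ hν0.ne', Real.cos_sub, Real.cos_two_pi, Real.sin_two_pi,
            Real.cos_arccos hc_gt.le hc_lt.le]
          ring
        refine ⟨⟨?_, ?_⟩, (hchar τ₂).mpr hcos⟩
        · apply div_nonneg _ hν0.le; linarith
        · rw [hτ₂, div_lt_div_iff₀ hν0 hν0]
          nlinarith
  rw [hset]
  have hne : τ₁ ≠ τ₂ := by
    have hlt : τ₁ < τ₂ := by
      rw [hτ₁, hτ₂]
      gcongr
      linarith
    exact ne_of_lt hlt
  exact Set.ncard_pair hne
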